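/- Let $r \geq 7$ with $r \equiv 3 \pmod 4$ and $q = e^{2\pi i/r}$. Then the quantum 6j-symbol $\left|\begin{smallmatrix} (r-3)/2 & (r-3)/4 & (r-3)/4 \\ (r-3)/2 & (r-3)/4 & (r-3)/4 \end{smallmatrix}\right|$ is a positive real number; explicitly, it equals $\Delta\!\left(\tfrac{r-3}{2}, \tfrac{r-3}{4}, \tfrac{r-3}{4}\right)^4 \cdot \dfrac{(-1)^{(r-3)/2}\,[\tfrac{r-3}{2}+1]!}{[\tfrac{r-3}{4}]!^2} > 0$. -/
import Mathlib


open scoped Real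
open Complex Finset

noncomputable section

/-- The quantum integer `[n]` at `q = exp(2πi/r)`. -/
def qint (r : ℕ) (n : ℤ) : ℂ :=
  (Complex.exp (2 * Real.pi * Complex.I / r) ^ n -
    Complex.exp (2 * Real.pi * Complex.I / r) ^ (-n)) /
  (Complex.exp (2 * Real.pi * Complex.I / r) -
    (Complex.exp (2 * Real.pi * Complex.I / r))⁻¹)

/-- The quantum factorial `[N]! = ∏_{k=1}^N [k]`, with `[0]! = 1`. -/
def qfact (r N : ℕ) : ℂ := ∏ k ∈ Finset.Icc 1 N, qint r (k : ℤ)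

/-- A triple `(a₁,a₂,a₃)` of elements of `I_r = {0,…,r-2}` is `r`-admissible. -/
def AdmissibleTriple (r a₁ a₂ a₃ : ℕ) : Prop :=
  a₁ ≤ r - 2 ∧ a₂ ≤ r - 2 ∧ a₃ ≤ r - 2 ∧
  Even (a₁ + a₂ + a₃) ∧
  a₁ + a₂ + a₃ ≤ 2 * (r - 2) ∧
  a₃ ≤ a₁ + a₂ ∧ a₂ ≤ a₁ + a₃ ∧ a₁ ≤ a₂ + a₃

/-- A 6-tuple `(a₁,…,a₆)` is `r`-admissible. -/
def Admissible6 (r a₁ a₂ a₃ a₄ a₅ a₆ : ℕ) : Prop :=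
  AdmissibleTriple r a₁ a₂ a₃ ∧ AdmissibleTriple r a₁ a₅ a₆ ∧
  AdmissibleTriple r a₂ a₄ a₆ ∧ AdmissibleTriple r a₃ a₄ a₅

/-- `Δ(a₁,a₂,a₃)`, using the principal complex square root, which realizes the
convention `√y = i√|y|` for negative real `y`. -/
def qdelta (r a₁ a₂ a₃ : ℕ) : ℂ :=
  (qfact r ((a₁ + a₂ - a₃) / 2) * qfact r ((a₁ + a₃ - a₂) / 2) *
      qfact r ((a₂ + a₃ - a₁) / 2) / qfact r ((a₁ + a₂ + a₃) / 2 + 1)) ^ (1 / 2 : ℂ)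

/-- The quantum 6j-symbol `|a₁ a₂ a₃; a₄ a₅ a₆|` at `q = exp(2πi/r)`. -/
def sixj (r a₁ a₂ a₃ a₄ a₅ a₆ : ℕ) : ℂ :=
  Complex.I ^ (-(a₁ + a₂ + a₃ + a₄ + a₅ + a₆ : ℤ)) *
    qdelta r a₁ a₂ a₃ * qdelta r a₁ a₅ a₆ * qdelta r a₂ a₄ a₆ * qdelta r a₃ a₄ a₅ *
    ∑ k ∈ Finset.Icc
        (max (max ((a₁ + a₂ + a₃) / 2) ((a₁ + a₅ + a₆) / 2))
             (max ((a₂ + a₄ + a₆) / 2) ((a₃ + a₄ + a₅) / 2)))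
        (min ((a₁ + a₂ + a₄ + a₅) / 2)
             (min ((a₁ + a₃ + a₄ + a₆) / 2) ((a₂ + a₃ + a₅ + a₆) / 2))),
      ((-1 : ℂ) ^ k * qfact r (k + 1)) /
        (qfact r (k - (a₁ + a₂ + a₃) / 2) * qfact r (k - (a₁ + a₅ + a₆) / 2) *
         qfact r (k - (a₂ + a₄ + a₆) / 2) * qfact r (k - (a₃ + a₄ + a₅) / 2) *
         qfact r ((a₁ + a₂ + a₄ + a₅) / 2 - k) * qfact r ((a₁ + a₃ + a₄ + a₆) / 2 - k) *
         qfact r ((a₂ + a₃ + a₅ + a₆) / 2 - k))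

/-- `n_r = (r-1)/2` if `r ≡ 1 mod 4`, and `n_r = (r-3)/2` if `r ≡ 3 mod 4`. -/
def nr (r : ℕ) : ℕ := if r % 4 = 1 then (r - 1) / 2 else (r - 3) / 2

lemma sin_2pi_div_pos {r : ℕ} (hr : 3 ≤ r) {j : ℕ} (h1 : 1 ≤ j) (h2 : 2 * j < r) :
    0 < Real.sin (2 * Real.pi * j / r) := by
  have hr0 : (0:ℝ) < r := by positivity
  have hj0 : (0:ℝ) < j := by exact_mod_cast h1
  apply Real.sin_pos_of_pos_of_lt_pi
  · positivity
  · rw [div_lt_iff₀ hr0]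
    have h2' : (2 * j : ℝ) < r := by exact_mod_cast h2
    nlinarith [Real.pi_pos]

lemma qint_real (r : ℕ) (hr : 3 ≤ r) (n : ℤ) :
    qint r n = ((Real.sin (2 * Real.pi * n / r) / Real.sin (2 * Real.pi / r) : ℝ) : ℂ) := by
  have hθ : (2 * Real.pi * Complex.I / r : ℂ) = ((2 * Real.pi / r : ℝ) : ℂ) * Complex.I := by
    push_cast; ring
  have key : ∀ z : ℂ, Complex.exp (z * Complex.I) - Complex.exp (-z * Complex.I) =
      2 * Complex.sin z * Complex.I := by
    intro z
    rw [Complex.exp_mul_I, Complex.exp_mul_I, Complex.cos_neg, Complex.sin_neg]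
    ring
  have hsd : Real.sin (2 * Real.pi / r) ≠ 0 := by
    have := sin_2pi_div_pos hr (le_refl 1) (by omega)
    simp only [Nat.cast_one, mul_one] at this
    exact ne_of_gt this
  rw [qint, hθ, ← Complex.exp_int_mul, ← Complex.exp_int_mul]
  have e1 : (n : ℂ) * (((2 * Real.pi / r : ℝ) : ℂ) * Complex.I) =
      ((2 * Real.pi * n / r : ℝ) : ℂ) * Complex.I := by push_cast; ring
  have e2 : ((-n : ℤ) : ℂ) * (((2 * Real.pi / r : ℝ) : ℂ) * Complex.I) =
      -((2 * Real.pi * n / r : ℝ) : ℂ) * Complex.I := by push_cast; ring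
  have e3 : (Complex.exp (((2 * Real.pi / r : ℝ) : ℂ) * Complex.I))⁻¹ =
      Complex.exp (-((2 * Real.pi / r : ℝ) : ℂ) * Complex.I) := by
    rw [neg_mul, Complex.exp_neg]
  rw [e1, e2, e3]
  have k1 := key ((2 * Real.pi * n / r : ℝ) : ℂ)
  have k2 := key ((2 * Real.pi / r : ℝ) : ℂ)
  rw [k1, k2]
  rw [← Complex.ofReal_sin, ← Complex.ofReal_sin]
  have hsd' : ((Real.sin (2 * Real.pi / r) : ℝ) : ℂ) ≠ 0 := by exact_mod_cast hsd
  rw [Complex.ofReal_div,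
    mul_div_mul_right _ _ Complex.I_ne_zero, mul_div_mul_left _ _ (two_ne_zero)]

lemma qfact_real (r : ℕ) (hr : 3 ≤ r) (N : ℕ) :
    qfact r N = ((∏ k ∈ Finset.Icc 1 N,
      Real.sin (2 * Real.pi * k / r) / Real.sin (2 * Real.pi / r) : ℝ) : ℂ) := by
  rw [qfact, Complex.ofReal_prod]
  refine Finset.prod_congr rfl fun k _ => ?_
  rw [qint_real r hr]
  norm_num

lemma qfact_pos (r : ℕ) (hr : 3 ≤ r) (N : ℕ) (hN : 2 * N < r) :
    0 < ∏ k ∈ Finset.Icc 1 N,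
      Real.sin (2 * Real.pi * k / r) / Real.sin (2 * Real.pi / r) := by
  apply Finset.prod_pos
  intro k hk
  rw [Finset.mem_Icc] at hk
  refine div_pos (sin_2pi_div_pos hr hk.1 (by omega)) ?_
  have := sin_2pi_div_pos hr (le_refl 1) (by omega)
  simpa using this

theorem special_case_low (r : ℕ) (hr : 7 ≤ r) (hmod : r % 4 = 3) :
    sixj r ((r - 3) / 2) ((r - 3) / 4) ((r - 3) / 4) ((r - 3) / 2) ((r - 3) / 4) ((r - 3) / 4) =
      qdelta r ((r - 3) / 2) ((r - 3) / 4) ((r - 3) / 4) ^ 4 *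
        (((-1 : ℂ) ^ ((r - 3) / 2) * qfact r ((r - 3) / 2 + 1)) / qfact r ((r - 3) / 4) ^ 2) ∧
    (sixj r ((r - 3) / 2) ((r - 3) / 4) ((r - 3) / 4) ((r - 3) / 2) ((r - 3) / 4) ((r - 3) / 4)).im
      = 0 ∧
    0 < (sixj r ((r - 3) / 2) ((r - 3) / 4) ((r - 3) / 4)
          ((r - 3) / 2) ((r - 3) / 4) ((r - 3) / 4)).re := by
  obtain ⟨m, rfl⟩ : ∃ m, r = 4 * m + 3 := ⟨(r - 3) / 4, by omega⟩
  have e2 : (4 * m + 3 - 3) / 2 = 2 * m := by omega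
  have e4 : (4 * m + 3 - 3) / 4 = m := by omega
  rw [e2, e4]
  have hq0 : qfact (4 * m + 3) 0 = 1 := by simp [qfact]
  have hqd : qdelta (4 * m + 3) m (2 * m) m = qdelta (4 * m + 3) (2 * m) m m := by
    rw [qdelta, qdelta]
    congr 1
    rw [show (m + 2 * m - m) / 2 = m by omega, show (m + m - 2 * m) / 2 = 0 by omega,
        show (2 * m + m - m) / 2 = m by omega, show (m + 2 * m + m) / 2 = 2 * m by omega,
        show (2 * m + m + m) / 2 = 2 * m by omega]
    ring
  have hI : Complex.I ^ (-((2 * m : ℕ) + (m : ℕ) + (m : ℕ) + (2 * m : ℕ) + (m : ℕ) + (m : ℕ) : ℤ))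
      = 1 := by
    rw [show (-((2 * m : ℕ) + (m : ℕ) + (m : ℕ) + (2 * m : ℕ) + (m : ℕ) + (m : ℕ) : ℤ))
        = -((8 * m : ℕ) : ℤ) by push_cast; ring,
      zpow_neg, zpow_natCast, show 8 * m = 4 * (2 * m) by ring, pow_mul, Complex.I_pow_four,
      one_pow, inv_one]
  have hsix : sixj (4 * m + 3) (2 * m) m m (2 * m) m m =
      qdelta (4 * m + 3) (2 * m) m m ^ 4 *
        (((-1 : ℂ) ^ (2 * m) * qfact (4 * m + 3) (2 * m + 1)) / qfact (4 * m + 3) m ^ 2) := by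
    rw [sixj, hqd]
    rw [show (2 * m + m + m) / 2 = 2 * m by omega, show (m + 2 * m + m) / 2 = 2 * m by omega,
        show (2 * m + m + 2 * m + m) / 2 = 3 * m by omega,
        show (m + m + m + m) / 2 = 2 * m by omega,
        show max (max (2 * m) (2 * m)) (max (2 * m) (2 * m)) = 2 * m by omega,
        show min (3 * m) (min (3 * m) (2 * m)) = 2 * m by omega,
        Finset.Icc_self, Finset.sum_singleton,
        show 2 * m - 2 * m = 0 by omega, show 3 * m - 2 * m = m by omega, hq0, hI]
    ring
  obtain ⟨A, hA, hApos⟩ : ∃ A : ℝ, qfact (4 * m + 3) m = (A : ℂ) ∧ 0 < A :=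
    ⟨_, qfact_real _ (by omega) m, qfact_pos _ (by omega) m (by omega)⟩
  obtain ⟨B, hB, hBpos⟩ : ∃ B : ℝ, qfact (4 * m + 3) (2 * m + 1) = (B : ℂ) ∧ 0 < B :=
    ⟨_, qfact_real _ (by omega) (2 * m + 1), qfact_pos _ (by omega) (2 * m + 1) (by omega)⟩
  have hbase : (0 : ℝ) < A * A / B := by positivity
  have hD : qdelta (4 * m + 3) (2 * m) m m = (((A * A / B) ^ ((1:ℝ) / 2) : ℝ) : ℂ) := by
    rw [qdelta, show (2 * m + m - m) / 2 = m by omega, show (m + m - 2 * m) / 2 = 0 by omega,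
        show (2 * m + m + m) / 2 = 2 * m by omega, hq0, mul_one, hA, hB,
        show ((A : ℂ) * A / B) = ((A * A / B : ℝ) : ℂ) by push_cast; ring,
        show (1 / 2 : ℂ) = (((1:ℝ) / 2 : ℝ) : ℂ) by norm_num,
      ← Complex.ofReal_cpow hbase.le]
  have hDpos : 0 < (A * A / B) ^ ((1:ℝ) / 2) := Real.rpow_pos_of_pos hbase _
  have hval : sixj (4 * m + 3) (2 * m) m m (2 * m) m m =
      ((((A * A / B) ^ ((1:ℝ) / 2)) ^ 4 * (B / A ^ 2) : ℝ) : ℂ) := by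
    rw [hsix, hD, hA, hB, show ((-1 : ℂ)) ^ (2 * m) = 1 by rw [pow_mul]; norm_num]
    push_cast
    ring
  refine ⟨hsix, by rw [hval]; exact Complex.ofReal_im _, ?_⟩
  rw [hval, Complex.ofReal_re]
  exact mul_pos (pow_pos hDpos 4) (div_pos hBpos (pow_pos hApos 2))
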